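/- The R-module K is free with basis { t^k · Π^{−n} : 0 ≤ k < |I|, n ≥ 1 }, where Π = Π_{i∈I}(t−t_i). -/

import Mathlib

set_option synthInstance.maxHeartbeats 1000000
set_option maxHeartbeats 1000000

noncomputable section

open Polynomial

variable (I : Type) [Fintype I] [DecidableEq I]

/-- `R = ℂ[(t_i)_{i ∈ I}]`. -/
abbrev Rbase := MvPolynomial I ℂ

/-- `R[t]`. -/
abbrev Rt (I : Type) := Polynomial (Rbase I)

/-- `Π = Π_{i∈I} (t − t_i) ∈ R[t]`. -/
def Pprod : Rt I := ∏ i : I, (X - C (MvPolynomial.X i))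

/-- `S = R[t][Π⁻¹]`, the localization of `R[t]` at `Π`. -/
abbrev Sloc := Localization.Away (Pprod I)

/-- The `R`-submodule `K ⊆ S` spanned by the elements `tⁿ·Π_{i∈I}(t−t_i)^{−k_i}` over all
tuples `(k_i) ∈ ℕ^I` and all `n` with `0 ≤ n < Σ_i k_i`. -/
def Ksub : Submodule (Rbase I) (Sloc I) :=
  Submodule.span (Rbase I)
    {s | ∃ (k : I → ℕ) (n : ℕ), n < ∑ i : I, k i ∧
      s = algebraMap (Rt I) (Sloc I) (X ^ n) *
        ∏ i : I, (Ring.inverse (algebraMap (Rt I) (Sloc I) (X - C (MvPolynomial.X i)))) ^ k i}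

/-- The proposed basis `{ t^k · Π^{−n} : 0 ≤ k < |I|, n ≥ 1 }` of `K`. -/
def Kbasis (p : Fin (Fintype.card I) × ℕ) : Sloc I :=
  algebraMap (Rt I) (Sloc I) (X ^ (p.1 : ℕ)) *
    (Ring.inverse (algebraMap (Rt I) (Sloc I) (Pprod I))) ^ (p.2 + 1)

set_option linter.unusedSectionVars false

variable {I}

/-- For a unit `a`, `a⁻ᵏ · a^M = a^(M-k)` when `k ≤ M`. -/
lemma inv_pow_mul_pow {A : Type*} [CommRing A] {a : A} (ha : IsUnit a) {k M : ℕ} (h : k ≤ M) :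
    Ring.inverse a ^ k * a ^ M = a ^ (M - k) := by
  conv_lhs => rw [show M = k + (M - k) from (Nat.add_sub_cancel' h).symm]
  rw [pow_add, ← mul_assoc, ← mul_pow, Ring.inverse_mul_cancel a ha, one_pow, one_mul]

/-- A linear combination of monic polynomials of pairwise distinct degrees vanishes
only if all coefficients vanish. -/
lemma coeff_lemma {ι A : Type*} [CommRing A] [Nontrivial A] (v : ι → A[X]) (g : ι → A)
    (s : Finset ι) :
    (∀ p ∈ s, (v p).Monic) →
    (∀ p ∈ s, ∀ q ∈ s, (v p).natDegree = (v q).natDegree → p = q) →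
    (∑ p ∈ s, C (g p) * v p) = 0 → ∀ p ∈ s, g p = 0 := by
  classical
  induction s using Finset.strongInduction with
  | _ s ih =>
    intro hm hinj hsum p hp
    obtain ⟨p₀, hp₀s, hmax⟩ := s.exists_max_image (fun q => (v q).natDegree) ⟨p, hp⟩
    have hg0 : g p₀ = 0 := by
      have hc := congrArg (fun q => Polynomial.coeff q ((v p₀).natDegree)) hsum
      simp only [finset_sum_coeff, coeff_C_mul, coeff_zero] at hc
      rw [Finset.sum_eq_single p₀ ?_ (fun h => absurd hp₀s h)] at hc
      · rwa [(hm p₀ hp₀s).coeff_natDegree, mul_one] at hc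
      · intro q hq hne
        rw [coeff_eq_zero_of_natDegree_lt, mul_zero]
        exact lt_of_le_of_ne (hmax q hq) (fun h => hne (hinj q hq p₀ hp₀s h))
    by_cases hpp : p = p₀
    · rw [hpp]; exact hg0
    · refine ih (s.erase p₀) (Finset.erase_ssubset hp₀s)
        (fun q hq => hm q (Finset.mem_of_mem_erase hq))
        (fun q hq r hr h => hinj _ (Finset.mem_of_mem_erase hq) _ (Finset.mem_of_mem_erase hr) h)
        ?_ p (Finset.mem_erase.mpr ⟨hpp, hp⟩)
      rw [← Finset.add_sum_erase _ _ hp₀s, hg0, map_zero, zero_mul, zero_add] at hsum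
      exact hsum

lemma Pprod_def : Pprod I = ∏ i : I, (X - C (MvPolynomial.X i)) := rfl

lemma Pprod_monic : (Pprod I).Monic :=
  monic_prod_of_monic _ _ (fun _ _ => monic_X_sub_C _)

lemma Pprod_natDegree : (Pprod I).natDegree = Fintype.card I := by
  rw [Pprod_def, natDegree_prod_of_monic _ _ (fun _ _ => monic_X_sub_C _)]
  simp

lemma phi_inj : Function.Injective (algebraMap (Rt I) (Sloc I)) := by
  apply IsLocalization.injective (M := Submonoid.powers (Pprod I))
  apply powers_le_nonZeroDivisors_of_noZeroDivisors
  exact Pprod_monic.ne_zero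

lemma phi_unit : IsUnit (algebraMap (Rt I) (Sloc I) (Pprod I)) :=
  IsLocalization.Away.algebraMap_isUnit _

lemma li_dvd (i : I) : (X - C (MvPolynomial.X i)) ∣ Pprod I := by
  rw [Pprod_def]; exact Finset.dvd_prod_of_mem _ (Finset.mem_univ i)

lemma li_unit (i : I) : IsUnit (algebraMap (Rt I) (Sloc I) (X - C (MvPolynomial.X i))) :=
  isUnit_of_dvd_unit (map_dvd _ (li_dvd i)) phi_unit

lemma smul_def' (c : Rbase I) (x : Sloc I) :
    c • x = algebraMap (Rt I) (Sloc I) (C c) * x := by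
  rw [Algebra.smul_def, IsScalarTower.algebraMap_eq (Rbase I) (Rt I) (Sloc I)]
  rfl

lemma phi_Pprod_eq : algebraMap (Rt I) (Sloc I) (Pprod I)
    = ∏ i : I, algebraMap (Rt I) (Sloc I) (X - C (MvPolynomial.X i)) :=
  (congrArg _ Pprod_def).trans (map_prod _ _ _)

lemma prod_inv_eq :
    (∏ i : I, Ring.inverse (algebraMap (Rt I) (Sloc I) (X - C (MvPolynomial.X i))))
      = Ring.inverse (algebraMap (Rt I) (Sloc I) (Pprod I)) := by
  rw [← IsUnit.mul_left_inj phi_unit, Ring.inverse_mul_cancel _ phi_unit]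
  conv_lhs => rw [phi_Pprod_eq, ← Finset.prod_mul_distrib]
  rw [Finset.prod_congr rfl (fun i _ => Ring.inverse_mul_cancel _ (li_unit i)),
    Finset.prod_const_one]

lemma gen_eq (k : I → ℕ) {M : ℕ} (hk : ∀ i, k i ≤ M) :
    (∏ i : I, Ring.inverse (algebraMap (Rt I) (Sloc I) (X - C (MvPolynomial.X i))) ^ k i)
      = algebraMap (Rt I) (Sloc I) (∏ i : I, (X - C (MvPolynomial.X i)) ^ (M - k i)) *
        Ring.inverse (algebraMap (Rt I) (Sloc I) (Pprod I)) ^ M := by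
  set φ := algebraMap (Rt I) (Sloc I)
  rw [← IsUnit.mul_left_inj (phi_unit.pow M)]
  have h1 : φ (Pprod I) ^ M = ∏ i : I, φ (X - C (MvPolynomial.X i)) ^ M := by
    rw [phi_Pprod_eq, ← Finset.prod_pow]
  calc (∏ i : I, Ring.inverse (φ (X - C (MvPolynomial.X i))) ^ k i) * φ (Pprod I) ^ M
      = ∏ i : I, (Ring.inverse (φ (X - C (MvPolynomial.X i))) ^ k i *
          φ (X - C (MvPolynomial.X i)) ^ M) := by
        rw [h1, Finset.prod_mul_distrib]
    _ = ∏ i : I, φ (X - C (MvPolynomial.X i)) ^ (M - k i) :=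
        Finset.prod_congr rfl fun i _ => inv_pow_mul_pow (li_unit i) (hk i)
    _ = φ (∏ i : I, (X - C (MvPolynomial.X i)) ^ (M - k i)) := by
        simp only [map_prod, map_pow]
    _ = φ (∏ i : I, (X - C (MvPolynomial.X i)) ^ (M - k i)) *
          (Ring.inverse (φ (Pprod I)) ^ M * φ (Pprod I) ^ M) := by
        rw [inv_pow_mul_pow phi_unit le_rfl, Nat.sub_self, pow_zero, mul_one]
    _ = _ := by ring

lemma base_mem [Nonempty I] (f : Rt I) (hf : f.natDegree < Fintype.card I) (m : ℕ) :
    algebraMap (Rt I) (Sloc I) f *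
      (Ring.inverse (algebraMap (Rt I) (Sloc I) (Pprod I))) ^ (m + 1)
      ∈ Submodule.span (Rbase I) (Set.range (Kbasis I)) := by
  have hrepr := f.as_sum_support_C_mul_X_pow
  nth_rewrite 1 [hrepr]
  rw [map_sum, Finset.sum_mul]
  apply Submodule.sum_mem
  intro k hk
  have hkd : k < Fintype.card I := lt_of_le_of_lt (le_natDegree_of_mem_supp k hk) hf
  have heq : algebraMap (Rt I) (Sloc I) (C (f.coeff k) * X ^ k) *
      Ring.inverse (algebraMap (Rt I) (Sloc I) (Pprod I)) ^ (m + 1)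
      = f.coeff k • Kbasis I (⟨k, hkd⟩, m) := by
    rw [smul_def', Kbasis, map_mul, mul_assoc]
  rw [heq]
  exact Submodule.smul_mem _ _ (Submodule.subset_span ⟨(⟨k, hkd⟩, m), rfl⟩)

lemma mem_span_aux [Nonempty I] : ∀ (M : ℕ) (f : Rt I),
    f.natDegree < Fintype.card I * (M + 1) →
    algebraMap (Rt I) (Sloc I) f *
      (Ring.inverse (algebraMap (Rt I) (Sloc I) (Pprod I))) ^ (M + 1)
      ∈ Submodule.span (Rbase I) (Set.range (Kbasis I)) := by
  intro M
  induction M with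
  | zero => intro f hf; exact base_mem f (by simpa using hf) 0
  | succ M ih =>
    intro f hf
    have hmod := modByMonic_add_div f (Pprod I)
    have hd : 0 < Fintype.card I := Fintype.card_pos
    set φ := algebraMap (Rt I) (Sloc I) with hφ
    set P := Pprod I with hP
    have hsplit : φ f * Ring.inverse (φ P) ^ (M + 1 + 1)
        = φ (f %ₘ P) * Ring.inverse (φ P) ^ (M + 1 + 1)
          + φ (f /ₘ P) * Ring.inverse (φ P) ^ (M + 1) := by
      conv_lhs => rw [← hmod]
      rw [map_add, add_mul, map_mul]
      congr 1
      calc φ P * φ (f /ₘ P) * Ring.inverse (φ P) ^ (M + 1 + 1)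
          = (φ P * Ring.inverse (φ P)) * (φ (f /ₘ P) * Ring.inverse (φ P) ^ (M + 1)) := by
            ring
        _ = _ := by rw [Ring.mul_inverse_cancel _ phi_unit, one_mul]
    rw [hsplit]
    apply Submodule.add_mem
    · apply base_mem
      rcases eq_or_ne (f %ₘ P) 0 with h | h
      · simpa [h] using hd
      · have h2 := natDegree_lt_natDegree h (degree_modByMonic_lt f Pprod_monic)
        rwa [Pprod_natDegree] at h2
    · apply ih
      rw [hP, natDegree_divByMonic f Pprod_monic, Pprod_natDegree]
      have h2 : Fintype.card I * (M + 1 + 1) = Fintype.card I * (M + 1) + Fintype.card I := by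
        ring
      have h3 : 0 < Fintype.card I * (M + 1) := Nat.mul_pos hd (Nat.succ_pos _)
      omega

lemma gen_mem [Nonempty I] (kk : I → ℕ) (n : ℕ) (hn : n < ∑ i : I, kk i) :
    algebraMap (Rt I) (Sloc I) (X ^ n) *
      ∏ i : I, (Ring.inverse (algebraMap (Rt I) (Sloc I) (X - C (MvPolynomial.X i)))) ^ kk i
      ∈ Submodule.span (Rbase I) (Set.range (Kbasis I)) := by
  obtain ⟨M', hM⟩ : ∃ M', ∑ i : I, kk i = M' + 1 := ⟨_, (Nat.succ_pred_eq_of_pos (by omega)).symm⟩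
  have hk : ∀ i, kk i ≤ M' + 1 := fun i =>
    hM ▸ Finset.single_le_sum (fun _ _ => Nat.zero_le _) (Finset.mem_univ i)
  rw [gen_eq kk hk, ← mul_assoc, ← map_mul]
  apply mem_span_aux M'
  have hmono : (∏ i : I, (X - C (MvPolynomial.X i)) ^ (M' + 1 - kk i) : Rt I).Monic :=
    monic_prod_of_monic _ _ (fun i _ => (monic_X_sub_C _).pow _)
  rw [(monic_X_pow n).natDegree_mul hmono, natDegree_X_pow,
    natDegree_prod_of_monic _ _ (fun i _ => (monic_X_sub_C _).pow _)]
  simp only [natDegree_pow, natDegree_X_sub_C, mul_one]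
  have hsum : (∑ i : I, (M' + 1 - kk i)) + ∑ i : I, kk i = Fintype.card I * (M' + 1) := by
    rw [← Finset.sum_add_distrib, Finset.sum_congr rfl fun i _ => Nat.sub_add_cancel (hk i)]
    simp [Finset.sum_const, mul_comm]
  omega

theorem Ksub_free [Nonempty I] :
    LinearIndependent (Rbase I) (Kbasis I) ∧
      Submodule.span (Rbase I) (Set.range (Kbasis I)) = Ksub I := by
  constructor
  · rw [linearIndependent_iff']
    intro s g hsum p hp
    set φ := algebraMap (Rt I) (Sloc I) with hφ
    set N := (s.sup fun q => q.2) + 1 with hN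
    have hle : ∀ q ∈ s, q.2 + 1 ≤ N := fun q hq => Nat.succ_le_succ (Finset.le_sup hq)
    have key : ∀ q ∈ s, φ (C (g q) * (X ^ (q.1 : ℕ) * Pprod I ^ (N - (q.2 + 1))))
        = (g q • Kbasis I q) * φ (Pprod I) ^ N := by
      intro q hq
      rw [smul_def', Kbasis]
      simp only [map_mul, map_pow]
      rw [← inv_pow_mul_pow phi_unit (hle q hq)]
      ring
    have hzero : φ (∑ q ∈ s, C (g q) * (X ^ (q.1 : ℕ) * Pprod I ^ (N - (q.2 + 1)))) = φ 0 := by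
      rw [map_zero, map_sum, Finset.sum_congr rfl key, ← Finset.sum_mul, hsum, zero_mul]
    have hpoly := phi_inj hzero
    refine coeff_lemma
      (fun q : Fin (Fintype.card I) × ℕ => X ^ (q.1 : ℕ) * Pprod I ^ (N - (q.2 + 1))) g s
      (fun q _ => (monic_X_pow _).mul (Pprod_monic.pow _)) ?_ hpoly p hp
    intro q hq r hr h
    have hdg : ∀ z : Fin (Fintype.card I) × ℕ,
        ((X : Rt I) ^ (z.1 : ℕ) * Pprod I ^ (N - (z.2 + 1))).natDegree
          = (z.1 : ℕ) + Fintype.card I * (N - (z.2 + 1)) := by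
      intro z
      rw [(monic_X_pow _).natDegree_mul (Pprod_monic.pow _), natDegree_X_pow, natDegree_pow,
        Pprod_natDegree, mul_comm]
    rw [hdg q, hdg r] at h
    have hd : 0 < Fintype.card I := Fintype.card_pos
    have e1 : (q.1 : ℕ) = (r.1 : ℕ) := by
      have h2 : ((q.1 : ℕ) + Fintype.card I * (N - (q.2 + 1))) % Fintype.card I
          = ((r.1 : ℕ) + Fintype.card I * (N - (r.2 + 1))) % Fintype.card I := by rw [h]
      rwa [Nat.add_mul_mod_self_left, Nat.add_mul_mod_self_left,
        Nat.mod_eq_of_lt q.1.isLt, Nat.mod_eq_of_lt r.1.isLt] at h2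
    have e2 : N - (q.2 + 1) = N - (r.2 + 1) :=
      Nat.eq_of_mul_eq_mul_left hd (by omega)
    have e3 : q.2 = r.2 := by
      have h1 := hle q hq
      have h2 := hle r hr
      omega
    exact Prod.ext (Fin.val_injective e1) e3
  · apply le_antisymm
    · rw [Submodule.span_le]
      rintro x ⟨p, rfl⟩
      apply Submodule.subset_span
      refine ⟨fun _ => p.2 + 1, (p.1 : ℕ), ?_, ?_⟩
      · calc (p.1 : ℕ) < Fintype.card I := p.1.isLt
          _ ≤ ∑ _i : I, (p.2 + 1) := by
              simp only [Finset.sum_const, Finset.card_univ, smul_eq_mul]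
              exact Nat.le_mul_of_pos_right _ (Nat.succ_pos _)
      · rw [Kbasis, Finset.prod_pow, prod_inv_eq]
    · rw [Ksub, Submodule.span_le]
      rintro x ⟨kk, n, hn, rfl⟩
      exact gen_mem kk n hn
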